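/- Let G = (X,Y;E) be a bipartite graph, let d ≥ 1, and suppose that every vertex of X has degree exactly d and every vertex of Y has degree at most b. Then G has an X-interval coloring using at most d·b colors. -/
import Mathlib


/-- `X` is one part of a bipartition of `G`: every edge joins `X` and its complement. -/
def IsBipartition {V : Type*} (G : SimpleGraph V) (X : Set V) : Prop :=
  ∀ v w, G.Adj v w → (v ∈ X ↔ w ∉ X)

/-- A proper edge coloring: distinct edges sharing a vertex get distinct colors. -/
def IsProperEdgeColoring {V : Type*} (G : SimpleGraph V) (c : G.edgeSet → ℕ) : Prop :=
  ∀ e f : G.edgeSet, e ≠ f → (∃ v, v ∈ (e : Sym2 V) ∧ v ∈ (f : Sym2 V)) → c e ≠ c f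

/-- The palette of a vertex: the set of colors on its incident edges. -/
def palette {V : Type*} (G : SimpleGraph V) (c : G.edgeSet → ℕ) (v : V) : Set ℕ :=
  {n | ∃ e : G.edgeSet, v ∈ (e : Sym2 V) ∧ c e = n}

/-- The coloring is interval at `v`: the palette of `v` is a set of consecutive integers. -/
def IntervalAt {V : Type*} (G : SimpleGraph V) (c : G.edgeSet → ℕ) (v : V) : Prop :=
  ∀ a b m : ℕ, a ∈ palette G c v → b ∈ palette G c v → a ≤ m → m ≤ b →
    m ∈ palette G c v

/-- Hall-type step: if the total number of forbidden colors inside a block `B` of size `d`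
is less than `d`, then we can injectively pick allowed colors from `B`. -/
lemma hall_core {ι : Type*} [Fintype ι] [DecidableEq ι] (d : ℕ)
    (hcard : Fintype.card ι = d) (A : ι → Finset ℕ) (B : Finset ℕ) (hB : B.card = d)
    (hsum : ∑ i, (A i ∩ B).card < d) :
    ∃ g : ι → ℕ, Function.Injective g ∧ ∀ i, g i ∈ B \ A i := by
  rw [← Finset.all_card_le_biUnion_card_iff_exists_injective]
  intro s
  rcases s.eq_empty_or_nonempty with rfl | hs
  · simp
  obtain ⟨i₀, hi₀s, hi₀min⟩ := s.exists_min_image (fun i => (A i ∩ B).card) hs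
  have hsub : B \ A i₀ ⊆ s.biUnion (fun i => B \ A i) :=
    Finset.subset_biUnion_of_mem (fun i => B \ A i) hi₀s
  have h1 : (B \ A i₀).card + (A i₀ ∩ B).card = B.card := by
    rw [Finset.inter_comm (A i₀) B]
    exact Finset.card_sdiff_add_card_inter B (A i₀)
  have hsd : s.card ≤ d := by
    simpa [Finset.card_univ, hcard] using Finset.card_le_univ s
  have hkey : (A i₀ ∩ B).card + s.card ≤ d := by
    by_contra hcon
    push_neg at hcon
    have hlow : ∀ i ∈ s, d + 1 - s.card ≤ (A i ∩ B).card := by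
      intro i hi
      have := hi₀min i hi
      omega
    have hA1 : s.card * (d + 1 - s.card) ≤ ∑ i ∈ s, (A i ∩ B).card := by
      calc s.card * (d + 1 - s.card) = ∑ _i ∈ s, (d + 1 - s.card) := by
            rw [Finset.sum_const, smul_eq_mul]
        _ ≤ ∑ i ∈ s, (A i ∩ B).card := Finset.sum_le_sum hlow
    have hA2 : ∑ i ∈ s, (A i ∩ B).card ≤ ∑ i, (A i ∩ B).card :=
      Finset.sum_le_sum_of_subset s.subset_univ
    have hd_le : d ≤ s.card * (d + 1 - s.card) := by
      obtain ⟨t, ht⟩ : ∃ t, s.card = t + 1 :=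
        ⟨s.card - 1, by have := Finset.card_pos.mpr hs; omega⟩
      obtain ⟨u, hu⟩ : ∃ u, d + 1 - s.card = u + 1 := ⟨d - s.card, by omega⟩
      have h7 : (t + 1) + (u + 1) = d + 1 := by omega
      rw [ht] at hu
      rw [ht, hu]
      have h8 : (t + 1) * (u + 1) = t * u + t + u + 1 := by ring
      nlinarith [Nat.zero_le (t * u)]
    linarith
  calc s.card ≤ (B \ A i₀).card := by omega
    _ ≤ (s.biUnion (fun i => B \ A i)).card := Finset.card_le_card hsub

/-- There is a block `[k*d, k*d + d)` with few forbidden colors. -/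
lemma block_core {ι : Type*} [Fintype ι] (d b : ℕ) (hd : 1 ≤ d) (hb : 1 ≤ b)
    (hcard : Fintype.card ι = d) (A : ι → Finset ℕ) (hA : ∀ i, (A i).card ≤ b - 1) :
    ∃ k, k < b ∧ ∑ i, (A i ∩ Finset.Ico (k * d) (k * d + d)).card < d := by
  by_contra hcon
  push_neg at hcon
  have hbd : b * d ≤ ∑ k ∈ Finset.range b, ∑ i, (A i ∩ Finset.Ico (k * d) (k * d + d)).card := by
    calc b * d = ∑ _k ∈ Finset.range b, d := by
          rw [Finset.sum_const, smul_eq_mul, Finset.card_range]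
      _ ≤ _ := Finset.sum_le_sum (fun k hk => hcon k (Finset.mem_range.mp hk))
  rw [Finset.sum_comm] at hbd
  have hinner : ∀ i, ∑ k ∈ Finset.range b, (A i ∩ Finset.Ico (k * d) (k * d + d)).card ≤ b - 1 := by
    intro i
    have hdisj : ∀ k ∈ Finset.range b, ∀ l ∈ Finset.range b, k ≠ l →
        Disjoint (A i ∩ Finset.Ico (k * d) (k * d + d)) (A i ∩ Finset.Ico (l * d) (l * d + d)) := by
      intro k _ l _ hkl
      rw [Finset.disjoint_left]
      intro m hm hm'
      simp only [Finset.mem_inter, Finset.mem_Ico] at hm hm'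
      rcases Nat.lt_or_ge k l with h | h
      · have hle : k * d + d ≤ l * d := by
          calc k * d + d = (k + 1) * d := by ring
            _ ≤ l * d := Nat.mul_le_mul_right d h
        omega
      · have hlk : l + 1 ≤ k := by omega
        have hle : l * d + d ≤ k * d := by
          calc l * d + d = (l + 1) * d := by ring
            _ ≤ k * d := Nat.mul_le_mul_right d hlk
        omega
    calc ∑ k ∈ Finset.range b, (A i ∩ Finset.Ico (k * d) (k * d + d)).card
        = ((Finset.range b).biUnion (fun k => A i ∩ Finset.Ico (k * d) (k * d + d))).card :=
          (Finset.card_biUnion hdisj).symm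
      _ ≤ (A i).card := Finset.card_le_card (by
          intro m hm
          simp only [Finset.mem_biUnion] at hm
          obtain ⟨k, _, hk⟩ := hm
          exact (Finset.mem_inter.mp hk).1)
      _ ≤ b - 1 := hA i
  have htot : ∑ i : ι, ∑ k ∈ Finset.range b, (A i ∩ Finset.Ico (k * d) (k * d + d)).card
      ≤ d * (b - 1) := by
    calc _ ≤ ∑ _i : ι, (b - 1) := Finset.sum_le_sum (fun i _ => hinner i)
      _ = d * (b - 1) := by rw [Finset.sum_const, smul_eq_mul, Finset.card_univ, hcard]
  have e1 : d * (b - 1) + d = b * d := by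
    rw [← Nat.mul_succ, Nat.succ_eq_add_one, Nat.sub_add_cancel hb, Nat.mul_comm]
  linarith

/-- Combination: a good block and an injective choice of fresh colors inside it. -/
lemma core_lemma {ι : Type*} [Fintype ι] [DecidableEq ι] (d b : ℕ) (hd : 1 ≤ d) (hb : 1 ≤ b)
    (hcard : Fintype.card ι = d) (A : ι → Finset ℕ) (hA : ∀ i, (A i).card ≤ b - 1) :
    ∃ k, k < b ∧ ∃ g : ι → ℕ, Function.Injective g ∧
      ∀ i, g i ∈ Finset.Ico (k * d) (k * d + d) \ A i := by
  obtain ⟨k, hk, hksum⟩ := block_core d b hd hb hcard A hA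
  obtain ⟨g, hg1, hg2⟩ := hall_core d hcard A (Finset.Ico (k * d) (k * d + d))
    (by rw [Nat.card_Ico, Nat.add_sub_cancel_left]) hksum
  exact ⟨k, hk, g, hg1, hg2⟩

/-- Counting incident edges: the subtype of edges containing `v` has cardinality `deg v`. -/
lemma card_incidence_subtype {V : Type*} [Fintype V] [DecidableEq V]
    (G : SimpleGraph V) [DecidableRel G.Adj] (v : V) :
    Fintype.card {e : G.edgeSet // v ∈ (e : Sym2 V)} = G.degree v := by
  rw [← SimpleGraph.card_incidenceSet_eq_degree]
  apply Fintype.card_congr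
  exact ⟨fun e => ⟨e.1.1, e.1.2, e.2⟩, fun e => ⟨⟨e.1, e.2.1⟩, e.2.2⟩,
    fun e => rfl, fun e => rfl⟩

lemma edge_rep {V : Type*} {G : SimpleGraph V} {X : Set V} (hbip : IsBipartition G X)
    {e : Sym2 V} (he : e ∈ G.edgeSet) : ∃ x y : V, x ∈ X ∧ y ∉ X ∧ e = s(x, y) := by
  revert he
  induction e using Sym2.ind with
  | _ v w =>
    intro he
    have hadj : G.Adj v w := he
    by_cases hv : v ∈ X
    · exact ⟨v, w, hv, (hbip v w hadj).mp hv, rfl⟩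
    · have hw : w ∈ X := not_not.mp (fun h => hv ((hbip v w hadj).mpr h))
      exact ⟨w, v, hw, hv, Sym2.eq_swap⟩

/-- If `G = (X, Y; E)` is a bipartite graph, `d ≥ 1`, every vertex of `X` has degree
exactly `d` and every vertex of `Y = Xᶜ` has degree at most `b`, then `G` has an
`X`-interval coloring using at most `d * b` colors. -/
theorem X_interval_coloring_of_X_regular {V : Type*} [Fintype V] [DecidableEq V]
    (G : SimpleGraph V) [DecidableRel G.Adj] (X : Set V) (d b : ℕ)
    (hd : 1 ≤ d)
    (hbip : IsBipartition G X)
    (hX : ∀ x ∈ X, G.degree x = d)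
    (hY : ∀ y ∉ X, G.degree y ≤ b) :
    ∃ c : G.edgeSet → ℕ, IsProperEdgeColoring G c ∧ (∀ e, c e < d * b) ∧
      ∀ x ∈ X, IntervalAt G c x := by
  classical
  by_cases hb : 1 ≤ b
  swap
  · -- `b = 0`: there are no edges at all.
    have hempty : ∀ e : G.edgeSet, False := by
      intro e
      obtain ⟨x, y, hx, hy, hs⟩ := edge_rep hbip e.2
      have hadj : G.Adj x y := by
        have := e.2
        rw [hs] at this
        exact this
      have hpos : 0 < G.degree y := G.degree_pos_iff_exists_adj y |>.mpr ⟨x, hadj.symm⟩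
      have := hY y hy
      omega
    refine ⟨fun _ => 0, fun e => (hempty e).elim, fun e => (hempty e).elim, ?_⟩
    intro x _ a b' m ha _ _ _
    obtain ⟨e, _, _⟩ := ha
    exact (hempty e).elim
  · choose xe ye hxeX hyeX hse using fun e : G.edgeSet => edge_rep hbip e.2
    have hxe_mem : ∀ e : G.edgeSet, xe e ∈ (e : Sym2 V) := by
      intro e; rw [hse e]; exact Sym2.mem_mk_left _ _
    have hye_mem : ∀ e : G.edgeSet, ye e ∈ (e : Sym2 V) := by
      intro e; rw [hse e]; exact Sym2.mem_mk_right _ _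
    have hxe_eq : ∀ (e : G.edgeSet) (x : V), x ∈ (e : Sym2 V) → x ∈ X → xe e = x := by
      intro e x hxm hxX
      rw [hse e, Sym2.mem_iff] at hxm
      rcases hxm with rfl | rfl
      · rfl
      · exact absurd hxX (hyeX e)
    have hother : ∀ (e : G.edgeSet) (v : V), v ∈ (e : Sym2 V) → v ≠ xe e → v = ye e := by
      intro e v hvm hvne
      rw [hse e, Sym2.mem_iff] at hvm
      tauto
    have main : ∀ S : Finset V, ∃ c : G.edgeSet → ℕ,
        (∀ e, c e < d * b) ∧
        (∀ e f : G.edgeSet, e ≠ f → (∃ v, v ∈ (e : Sym2 V) ∧ v ∈ (f : Sym2 V)) →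
          xe e ∈ S → xe f ∈ S → c e ≠ c f) ∧
        (∀ x ∈ S, x ∈ X → ∃ k, k < b ∧ ∀ e : G.edgeSet, x ∈ (e : Sym2 V) →
          c e ∈ Finset.Ico (k * d) (k * d + d)) := by
      intro S
      induction S using Finset.induction_on with
      | empty =>
        refine ⟨fun _ => 0, fun e => Nat.mul_pos (by omega) (by omega), ?_, ?_⟩
        · intro e f _ _ h
          exact absurd h (Finset.notMem_empty _)
        · intro x hx
          exact absurd hx (Finset.notMem_empty _)
      | @insert x S hxS ih =>
        obtain ⟨c₀, hb₀, hp₀, hi₀⟩ := ih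
        by_cases hxX : x ∈ X
        swap
        · refine ⟨c₀, hb₀, ?_, ?_⟩
          · intro e f hne hsh hee hff
            refine hp₀ e f hne hsh ?_ ?_
            · rcases Finset.mem_insert.mp hee with h | h
              · exact absurd (h ▸ hxeX e) hxX
              · exact h
            · rcases Finset.mem_insert.mp hff with h | h
              · exact absurd (h ▸ hxeX f) hxX
              · exact h
          · intro x' hx' hx'X
            rcases Finset.mem_insert.mp hx' with rfl | h
            · exact absurd hx'X hxX
            · exact hi₀ x' h hx'X
        · -- `x ∈ X`: recolor the edges at `x`.
          have hcard : Fintype.card {e : G.edgeSet // x ∈ (e : Sym2 V)} = d := by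
            rw [card_incidence_subtype]
            exact hX x hxX
          set F : {e : G.edgeSet // x ∈ (e : Sym2 V)} → Finset ℕ := fun e =>
            (Finset.univ.filter
              (fun f : G.edgeSet => xe f ∈ S ∧ ye e.1 ∈ (f : Sym2 V))).image c₀ with hFdef
          have hxe_x : ∀ e : {e : G.edgeSet // x ∈ (e : Sym2 V)}, xe e.1 = x :=
            fun e => hxe_eq e.1 x e.2 hxX
          have hFcard : ∀ e, (F e).card ≤ b - 1 := by
            intro e
            have h1 : (Finset.univ.filter
                (fun f : G.edgeSet => xe f ∈ S ∧ ye e.1 ∈ (f : Sym2 V)))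
                ⊆ (Finset.univ.filter (fun f : G.edgeSet => ye e.1 ∈ (f : Sym2 V))).erase e.1 := by
              intro f hf
              simp only [Finset.mem_filter, Finset.mem_univ, true_and] at hf
              refine Finset.mem_erase.mpr ⟨?_, by
                simp only [Finset.mem_filter, Finset.mem_univ, true_and]; exact hf.2⟩
              rintro rfl
              rw [hxe_x e] at hf
              exact hxS hf.1
            have hmem : e.1 ∈ Finset.univ.filter
                (fun f : G.edgeSet => ye e.1 ∈ (f : Sym2 V)) := by
              simp only [Finset.mem_filter, Finset.mem_univ, true_and]
              exact hye_mem e.1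
            have h2 : (Finset.univ.filter
                (fun f : G.edgeSet => ye e.1 ∈ (f : Sym2 V))).card = G.degree (ye e.1) := by
              rw [← card_incidence_subtype G (ye e.1), Fintype.card_subtype]
            calc (F e).card ≤ _ := Finset.card_image_le
              _ ≤ ((Finset.univ.filter
                  (fun f : G.edgeSet => ye e.1 ∈ (f : Sym2 V))).erase e.1).card :=
                Finset.card_le_card h1
              _ = G.degree (ye e.1) - 1 := by rw [Finset.card_erase_of_mem hmem, h2]
              _ ≤ b - 1 := Nat.sub_le_sub_right (hY (ye e.1) (hyeX e.1)) 1
          obtain ⟨k, hk, g, hginj, hgmem⟩ := core_lemma d b hd hb hcard F hFcard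
          refine ⟨fun f => if h : x ∈ (f : Sym2 V) then g ⟨f, h⟩ else c₀ f, ?_, ?_, ?_⟩
          · intro e
            dsimp only
            by_cases h : x ∈ (e : Sym2 V)
            · rw [dif_pos h]
              have hm := Finset.mem_sdiff.mp (hgmem ⟨e, h⟩)
              have h2 := (Finset.mem_Ico.mp hm.1).2
              have h3 : k * d + d ≤ b * d := by
                calc k * d + d = (k + 1) * d := by ring
                  _ ≤ b * d := Nat.mul_le_mul_right d hk
              exact lt_of_lt_of_le h2 (le_trans h3 (le_of_eq (Nat.mul_comm b d)))
            · rw [dif_neg h]; exact hb₀ e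
          · intro e f hne hsh heS hfS
            dsimp only
            by_cases he : x ∈ (e : Sym2 V) <;> by_cases hf : x ∈ (f : Sym2 V)
            · rw [dif_pos he, dif_pos hf]
              intro hc
              exact hne (congrArg Subtype.val (hginj hc))
            · rw [dif_pos he, dif_neg hf]
              have hfS' : xe f ∈ S := by
                rcases Finset.mem_insert.mp hfS with h | h
                · exact absurd (h ▸ hxe_mem f) hf
                · exact h
              obtain ⟨v, hve, hvf⟩ := hsh
              have hvx : v ≠ x := by rintro rfl; exact hf hvf
              have hvye : v = ye e := by
                refine hother e v hve ?_
                rw [hxe_eq e x he hxX]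
                exact hvx
              have hmemF : c₀ f ∈ F ⟨e, he⟩ := by
                rw [hFdef]
                refine Finset.mem_image.mpr ⟨f, ?_, rfl⟩
                simp only [Finset.mem_filter, Finset.mem_univ, true_and]
                exact ⟨hfS', hvye ▸ hvf⟩
              intro hc
              apply (Finset.mem_sdiff.mp (hgmem ⟨e, he⟩)).2
              rw [hc]
              exact hmemF
            · rw [dif_neg he, dif_pos hf]
              have heS' : xe e ∈ S := by
                rcases Finset.mem_insert.mp heS with h | h
                · exact absurd (h ▸ hxe_mem e) he
                · exact h
              obtain ⟨v, hve, hvf⟩ := hsh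
              have hvx : v ≠ x := by rintro rfl; exact he hve
              have hvye : v = ye f := by
                refine hother f v hvf ?_
                rw [hxe_eq f x hf hxX]
                exact hvx
              have hmemF : c₀ e ∈ F ⟨f, hf⟩ := by
                rw [hFdef]
                refine Finset.mem_image.mpr ⟨e, ?_, rfl⟩
                simp only [Finset.mem_filter, Finset.mem_univ, true_and]
                exact ⟨heS', hvye ▸ hve⟩
              intro hc
              apply (Finset.mem_sdiff.mp (hgmem ⟨f, hf⟩)).2
              rw [← hc]
              exact hmemF
            · rw [dif_neg he, dif_neg hf]
              have heS' : xe e ∈ S := by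
                rcases Finset.mem_insert.mp heS with h | h
                · exact absurd (h ▸ hxe_mem e) he
                · exact h
              have hfS' : xe f ∈ S := by
                rcases Finset.mem_insert.mp hfS with h | h
                · exact absurd (h ▸ hxe_mem f) hf
                · exact h
              exact hp₀ e f hne hsh heS' hfS'
          · intro x' hx' hx'X
            rcases Finset.mem_insert.mp hx' with rfl | hx'S
            · refine ⟨k, hk, ?_⟩
              intro e he
              dsimp only
              rw [dif_pos he]
              exact (Finset.mem_sdiff.mp (hgmem ⟨e, he⟩)).1
            · obtain ⟨k', hk', hall⟩ := hi₀ x' hx'S hx'X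
              refine ⟨k', hk', ?_⟩
              intro e he'
              dsimp only
              have hxne : ¬ x ∈ (e : Sym2 V) := by
                intro hxm
                have h1 := hxe_eq e x hxm hxX
                have h2 := hxe_eq e x' he' hx'X
                have hxx : x = x' := by rw [← h1, h2]
                exact hxS (hxx ▸ hx'S)
              rw [dif_neg hxne]
              exact hall e he'
    obtain ⟨c, hcb, hcp, hci⟩ := main Finset.univ
    refine ⟨c, ?_, hcb, ?_⟩
    · intro e f hne hsh
      exact hcp e f hne hsh (Finset.mem_univ _) (Finset.mem_univ _)
    · intro x hxX a b' m ha hb' ham hmb'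
      obtain ⟨k, hk, hall⟩ := hci x (Finset.mem_univ x) hxX
      obtain ⟨e₁, he₁, hce₁⟩ := ha
      obtain ⟨e₂, he₂, hce₂⟩ := hb'
      have ha1 := Finset.mem_Ico.mp (hall e₁ he₁)
      have ha2 := Finset.mem_Ico.mp (hall e₂ he₂)
      rw [hce₁] at ha1
      rw [hce₂] at ha2
      have hm : m ∈ Finset.Ico (k * d) (k * d + d) :=
        Finset.mem_Ico.mpr ⟨le_trans ha1.1 ham, lt_of_le_of_lt hmb' ha2.2⟩
      have hTcard : (Finset.univ.filter (fun e : G.edgeSet => x ∈ (e : Sym2 V))).card = d := by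
        rw [← Fintype.card_subtype, card_incidence_subtype]
        exact hX x hxX
      have himg : (Finset.univ.filter (fun e : G.edgeSet => x ∈ (e : Sym2 V))).image c
          = Finset.Ico (k * d) (k * d + d) := by
        apply Finset.eq_of_subset_of_card_le
        · intro n hn
          obtain ⟨e, heT, rfl⟩ := Finset.mem_image.mp hn
          exact hall e ((Finset.mem_filter.mp heT).2)
        · rw [Nat.card_Ico, Nat.add_sub_cancel_left,
            Finset.card_image_of_injOn, hTcard]
          intro e heT f hfT hcef
          by_contra hne
          exact hcp e f hne
            ⟨x, (Finset.mem_filter.mp heT).2, (Finset.mem_filter.mp hfT).2⟩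
            (Finset.mem_univ _) (Finset.mem_univ _) hcef
      have hmm : m ∈ (Finset.univ.filter (fun e : G.edgeSet => x ∈ (e : Sym2 V))).image c := by
        rw [himg]; exact hm
      obtain ⟨e, heT, hce⟩ := Finset.mem_image.mp hmm
      exact ⟨e, (Finset.mem_filter.mp heT).2, hce⟩
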